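/- arXiv:2207.14351 — 2 statements merged into one kernel-verified Lean document; each statement's English description precedes it below -/
import Mathlib

section
/- Let ω ∈ ℝ and let h: ℝ × ℝ → ℂ be a C¹ function, 2π-periodic in its second argument, such that |h(u,γ)| ≤ C(1+|u|)^{−2} and |∂_u h(u,γ)| + |∂_γ h(u,γ)| ≤ C(1+|u|)^{−2} for some C > 0 and all (u,γ). Then G(h)(u,γ) := −∫₀^{∞} h(u+s, γ+ωs) ds is well defined and C¹, and satisfies (∂_u + ω ∂_γ) G(h) = h on ℝ × ℝ. -/
open MeasureTheory Set Metric Filter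

lemma aux13_opnorm (D : ℝ × ℝ →L[ℝ] ℂ) : ‖D‖ ≤ ‖D (1, 0)‖ + ‖D (0, 1)‖ := by
  refine D.opNorm_le_bound (by positivity) fun v => ?_
  have hv : D v = v.1 • D (1, 0) + v.2 • D (0, 1) := by
    have hv' : v = v.1 • ((1 : ℝ), (0 : ℝ)) + v.2 • ((0 : ℝ), (1 : ℝ)) := by
      ext <;> simp
    conv_lhs => rw [hv']
    rw [D.map_add, D.map_smul, D.map_smul]
  rw [hv]
  calc ‖v.1 • D (1, 0) + v.2 • D (0, 1)‖
      ≤ ‖v.1 • D (1, 0)‖ + ‖v.2 • D (0, 1)‖ := norm_add_le _ _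
    _ = |v.1| * ‖D (1, 0)‖ + |v.2| * ‖D (0, 1)‖ := by
        rw [norm_smul, norm_smul, Real.norm_eq_abs, Real.norm_eq_abs]
    _ ≤ ‖v‖ * ‖D (1, 0)‖ + ‖v‖ * ‖D (0, 1)‖ := by
        gcongr
        · exact norm_fst_le v
        · exact norm_snd_le v
    _ = (‖D (1, 0)‖ + ‖D (0, 1)‖) * ‖v‖ := by ring

lemma aux13_integrable (c : ℝ) : Integrable (fun s : ℝ => (1 + (c + s) ^ 2)⁻¹) :=
  integrable_inv_one_add_sq.comp_add_left c

lemma aux13_div (C t : ℝ) (hC : 0 ≤ C) : C / (1 + |t|) ^ 2 ≤ C * (1 + t ^ 2)⁻¹ := by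
  rw [div_eq_mul_inv]
  have h1 : (0:ℝ) < 1 + t ^ 2 := by positivity
  have h2 : 1 + t ^ 2 ≤ (1 + |t|) ^ 2 := by nlinarith [abs_nonneg t, sq_abs t]
  have h3 : ((1 + |t|) ^ 2)⁻¹ ≤ (1 + t ^ 2)⁻¹ := by
    apply inv_anti₀ h1 h2
  exact mul_le_mul_of_nonneg_left h3 hC

open MeasureTheory in
theorem stmt13 (ω : ℝ) (C : ℝ) (hC : 0 < C) (h : ℝ × ℝ → ℂ)
    (hsmooth : ContDiff ℝ 1 h)
    (hper : ∀ u γ : ℝ, h (u, γ + 2 * Real.pi) = h (u, γ))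
    (hbound : ∀ u γ : ℝ, ‖h (u, γ)‖ ≤ C / (1 + |u|) ^ 2)
    (hdbound : ∀ u γ : ℝ,
      ‖fderiv ℝ h (u, γ) (1, 0)‖ + ‖fderiv ℝ h (u, γ) (0, 1)‖ ≤ C / (1 + |u|) ^ 2) :
    (∀ u γ : ℝ, IntegrableOn (fun s => h (u + s, γ + ω * s)) (Set.Ioi (0 : ℝ))) ∧
    ContDiff ℝ 1 (fun p : ℝ × ℝ => -∫ s in Set.Ioi (0 : ℝ), h (p.1 + s, p.2 + ω * s)) ∧
    ∀ u γ : ℝ,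
      fderiv ℝ (fun p : ℝ × ℝ => -∫ s in Set.Ioi (0 : ℝ), h (p.1 + s, p.2 + ω * s))
          (u, γ) (1, 0)
        + (ω : ℂ) * fderiv ℝ
            (fun p : ℝ × ℝ => -∫ s in Set.Ioi (0 : ℝ), h (p.1 + s, p.2 + ω * s))
            (u, γ) (0, 1)
      = h (u, γ) := by
  have hdiff : Differentiable ℝ h := hsmooth.differentiable one_ne_zero
  have hDnorm : ∀ q : ℝ × ℝ, ‖fderiv ℝ h q‖ ≤ C / (1 + |q.1|) ^ 2 := by
    intro q
    refine (aux13_opnorm _).trans ?_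
    simpa using hdbound q.1 q.2
  -- pointwise derivative of the integrand in the parameter
  have key : ∀ (s : ℝ) (p : ℝ × ℝ),
      HasFDerivAt (fun x : ℝ × ℝ => h (x.1 + s, x.2 + ω * s))
        (fderiv ℝ h (p.1 + s, p.2 + ω * s)) p := by
    intro s p
    have h1 : HasFDerivAt (fun x : ℝ × ℝ => (x.1 + s, x.2 + ω * s))
        (ContinuousLinearMap.id ℝ (ℝ × ℝ)) p := by
      have heq : (fun x : ℝ × ℝ => (x.1 + s, x.2 + ω * s)) = fun x => x + (s, ω * s) := by
        funext x; simp [Prod.ext_iff]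
      rw [heq]
      simpa using (hasFDerivAt_id p).add_const (s, ω * s)
    exact (hdiff _).hasFDerivAt.comp p h1
  -- continuity of the integrand families
  have hcontF : ∀ x : ℝ × ℝ, Continuous fun s : ℝ => h (x.1 + s, x.2 + ω * s) := by
    intro x
    exact hsmooth.continuous.comp
      ((continuous_const.add continuous_id).prodMk
        (continuous_const.add (continuous_const.mul continuous_id)))
  have hcontF' : ∀ x : ℝ × ℝ, Continuous fun s : ℝ => fderiv ℝ h (x.1 + s, x.2 + ω * s) := by
    intro x
    exact (hsmooth.continuous_fderiv one_ne_zero).comp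
      ((continuous_const.add continuous_id).prodMk
        (continuous_const.add (continuous_const.mul continuous_id)))
  -- integrability of the integrand
  have hint : ∀ p : ℝ × ℝ, IntegrableOn (fun s => h (p.1 + s, p.2 + ω * s)) (Ioi (0 : ℝ)) := by
    intro p
    refine Integrable.mono' (((aux13_integrable p.1).const_mul C).integrableOn)
      (hcontF p).aestronglyMeasurable ?_
    filter_upwards with s
    exact (hbound _ _).trans (aux13_div C _ hC.le)
  -- integrability of the derivative family
  have hint' : ∀ p : ℝ × ℝ,
      IntegrableOn (fun s => fderiv ℝ h (p.1 + s, p.2 + ω * s)) (Ioi (0 : ℝ)) := by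
    intro p
    refine Integrable.mono' (((aux13_integrable p.1).const_mul C).integrableOn)
      (hcontF' p).aestronglyMeasurable ?_
    filter_upwards with s
    exact (hDnorm (p.1 + s, p.2 + ω * s)).trans (aux13_div C _ hC.le)
  -- the uniform local bound on the derivative family
  have hball : ∀ (p x : ℝ × ℝ), x ∈ ball p 1 → ∀ s : ℝ,
      ‖fderiv ℝ h (x.1 + s, x.2 + ω * s)‖ ≤ (4 * C) * (1 + (p.1 + s) ^ 2)⁻¹ := by
    intro p x hx s
    have hd1 : |x.1 - p.1| < 1 := by
      have := le_max_left (dist x.1 p.1) (dist x.2 p.2)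
      rw [← Prod.dist_eq] at this
      calc |x.1 - p.1| = dist x.1 p.1 := (Real.dist_eq _ _).symm
        _ ≤ dist x p := this
        _ < 1 := hx
    have key2 : 1 + |p.1 + s| ≤ 2 * (1 + |x.1 + s|) := by
      have h3 : |p.1 + s| ≤ |x.1 + s| + |p.1 - x.1| := by
        have := abs_add_le (x.1 + s) (p.1 - x.1)
        have he : x.1 + s + (p.1 - x.1) = p.1 + s := by ring
        rwa [he] at this
      have h5 : |p.1 - x.1| ≤ 1 := by rw [abs_sub_comm]; exact hd1.le
      linarith [h3, h5, abs_nonneg (x.1 + s)]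
    calc ‖fderiv ℝ h (x.1 + s, x.2 + ω * s)‖
        ≤ C / (1 + |x.1 + s|) ^ 2 := hDnorm (x.1 + s, x.2 + ω * s)
      _ ≤ (4 * C) / (1 + |p.1 + s|) ^ 2 := by
          rw [div_le_div_iff₀ (by positivity) (by positivity)]
          have hm := mul_le_mul key2 key2 (by positivity) (by positivity)
          nlinarith [abs_nonneg (x.1 + s), abs_nonneg (p.1 + s), hC.le, hm]
      _ ≤ (4 * C) * (1 + (p.1 + s) ^ 2)⁻¹ := aux13_div (4 * C) _ (by positivity)
  -- derivative of the parametric integral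
  have hasF : ∀ p : ℝ × ℝ,
      HasFDerivAt (fun x : ℝ × ℝ => ∫ s in Ioi (0 : ℝ), h (x.1 + s, x.2 + ω * s))
        (∫ s in Ioi (0 : ℝ), fderiv ℝ h (p.1 + s, p.2 + ω * s)) p := by
    intro p
    refine hasFDerivAt_integral_of_dominated_of_fderiv_le
      (F' := fun x s => fderiv ℝ h (x.1 + s, x.2 + ω * s))
      (bound := fun s => (4 * C) * (1 + (p.1 + s) ^ 2)⁻¹) (ball_mem_nhds p one_pos)
      (Eventually.of_forall fun x => (hcontF x).aestronglyMeasurable)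
      (hint p) (hcontF' p).aestronglyMeasurable ?_
      (((aux13_integrable p.1).const_mul (4 * C)).integrableOn) ?_
    · filter_upwards with s x hx
      exact hball p x hx s
    · filter_upwards with s x _
      exact key s x
  have hasG : ∀ p : ℝ × ℝ,
      HasFDerivAt (fun x : ℝ × ℝ => -∫ s in Ioi (0 : ℝ), h (x.1 + s, x.2 + ω * s))
        (-∫ s in Ioi (0 : ℝ), fderiv ℝ h (p.1 + s, p.2 + ω * s)) p :=
    fun p => (hasF p).neg
  refine ⟨fun u γ => hint (u, γ), ?_, ?_⟩
  · -- C¹ regularity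
    rw [contDiff_one_iff_fderiv]
    refine ⟨fun p => (hasG p).differentiableAt, ?_⟩
    have hfd : (fderiv ℝ fun p : ℝ × ℝ => -∫ s in Ioi (0 : ℝ), h (p.1 + s, p.2 + ω * s))
        = fun p : ℝ × ℝ => -∫ s in Ioi (0 : ℝ), fderiv ℝ h (p.1 + s, p.2 + ω * s) :=
      funext fun p => (hasG p).fderiv
    rw [hfd]
    refine Continuous.neg ?_
    refine continuous_iff_continuousAt.2 fun p => ?_
    refine continuousAt_of_dominated
      (Eventually.of_forall fun x => (hcontF' x).aestronglyMeasurable) ?_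
      (((aux13_integrable p.1).const_mul (4 * C)).integrableOn) ?_
    · filter_upwards [ball_mem_nhds p one_pos] with x hx
      filter_upwards with s
      exact hball p x hx s
    · filter_upwards with s
      exact ((hsmooth.continuous_fderiv one_ne_zero).comp
        ((continuous_fst.add continuous_const).prodMk
          (continuous_snd.add continuous_const))).continuousAt
  · -- the PDE
    intro u γ
    have hf : fderiv ℝ (fun p : ℝ × ℝ => -∫ s in Ioi (0 : ℝ), h (p.1 + s, p.2 + ω * s)) (u, γ)
        = -∫ s in Ioi (0 : ℝ), fderiv ℝ h (u + s, γ + ω * s) := (hasG (u, γ)).fderiv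
    rw [hf]
    set D : ℝ × ℝ →L[ℝ] ℂ := ∫ s in Ioi (0 : ℝ), fderiv ℝ h (u + s, γ + ω * s) with hD
    have happ : ∀ v : ℝ × ℝ, D v = ∫ s in Ioi (0 : ℝ), fderiv ℝ h (u + s, γ + ω * s) v :=
      fun v => ContinuousLinearMap.integral_apply (hint' (u, γ)) v
    -- FTC along the characteristic
    have hψ : ∀ s : ℝ, HasDerivAt (fun s : ℝ => h (u + s, γ + ω * s))
        (fderiv ℝ h (u + s, γ + ω * s) ((1 : ℝ), ω)) s := by
      intro s
      have h1 : HasDerivAt (fun s : ℝ => ((u + s, γ + ω * s) : ℝ × ℝ)) ((1 : ℝ), ω) s := by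
        have ha : HasDerivAt (fun s : ℝ => u + s) 1 s := by
          simpa using (hasDerivAt_id s).const_add u
        have hb : HasDerivAt (fun s : ℝ => γ + ω * s) ω s := by
          have := ((hasDerivAt_id s).const_mul ω).const_add γ
          simpa using this
        exact ha.prodMk hb
      exact (hdiff _).hasFDerivAt.comp_hasDerivAt s h1
    have hg'int : IntegrableOn (fun s => fderiv ℝ h (u + s, γ + ω * s) ((1 : ℝ), ω))
        (Ioi (0 : ℝ)) :=
      (ContinuousLinearMap.apply ℝ ℂ (((1 : ℝ), ω) : ℝ × ℝ)).integrable_comp (hint' (u, γ))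
    have htend : Tendsto (fun s : ℝ => h (u + s, γ + ω * s)) atTop (nhds 0) := by
      have h1 : Tendsto (fun s : ℝ => 1 + |u + s|) atTop atTop :=
        tendsto_atTop_add_const_left _ 1
          (tendsto_abs_atTop_atTop.comp (tendsto_atTop_add_const_left _ u tendsto_id))
      have h2 : Tendsto (fun s : ℝ => (1 + |u + s|) ^ 2) atTop atTop :=
        (tendsto_pow_atTop two_ne_zero).comp h1
      have h3 : Tendsto (fun s : ℝ => C / (1 + |u + s|) ^ 2) atTop (nhds 0) :=
        Tendsto.div_atTop tendsto_const_nhds h2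
      exact squeeze_zero_norm (fun s => hbound (u + s) (γ + ω * s)) h3
    have hFTC : ∫ s in Ioi (0 : ℝ), fderiv ℝ h (u + s, γ + ω * s) ((1 : ℝ), ω)
        = 0 - h (u + 0, γ + ω * 0) :=
      integral_Ioi_of_hasDerivAt_of_tendsto' (fun s _ => hψ s) hg'int htend
    have hDval : D ((1 : ℝ), ω) = -h (u, γ) := by
      rw [happ, hFTC]; simp
    have hsmul : (ω : ℂ) * D (0, 1) = D (0, ω) := by
      have : ((0 : ℝ), ω) = ω • ((0 : ℝ), (1 : ℝ)) := by simp
      rw [this, D.map_smul, Complex.real_smul]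
    calc (-D) (1, 0) + (ω : ℂ) * (-D) (0, 1)
        = -(D (1, 0) + (ω : ℂ) * D (0, 1)) := by
          simp [mul_comm]; ring
      _ = -(D (1, 0) + D (0, ω)) := by rw [hsmul]
      _ = -(D ((1, 0) + (0, ω))) := by rw [D.map_add]
      _ = -(D ((1 : ℝ), ω)) := by norm_num
      _ = h (u, γ) := by rw [hDval, neg_neg]
end

section
/- For all integers j ≥ 0 and ℓ ≥ 0 there exist real numbers a₀, …, a_j, with a₀ = 1/(ℓ+1), such that the polynomial P(x,y) = Σ_{i=0}^{j} a_i x^{2(j−i)} y^{ℓ+2i+1} satisfies y·∂ₓP + x·∂_yP = x^{2j+1} y^{ℓ}. In particular every homogeneous polynomial which is odd in x lies in the range of the operator L(C) = y ∂ₓC + x ∂_yC acting on homogeneous polynomials (even in x) of one degree higher. -/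
noncomputable def stmt16aux (j ℓ : ℕ) : ℕ → ℝ
  | 0 => 1 / ((ℓ : ℝ) + 1)
  | (i + 1) => -(2 * ((j - i : ℕ) : ℝ)) * stmt16aux j ℓ i / ((ℓ : ℝ) + 2 * i + 3)

lemma stmt16aux_rec (j ℓ i : ℕ) :
    stmt16aux j ℓ (i + 1) * ((ℓ : ℝ) + 2 * i + 3) = -(2 * ((j - i : ℕ) : ℝ)) * stmt16aux j ℓ i := by
  have h : ((ℓ : ℝ) + 2 * i + 3) ≠ 0 := by positivity
  rw [stmt16aux]
  field_simp

theorem stmt16 (j ℓ : ℕ) :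
    ∃ a : Fin (j + 1) → ℝ, a 0 = 1 / ((ℓ : ℝ) + 1) ∧
      ∀ x y : ℝ,
        y * deriv (fun x' : ℝ =>
              ∑ i : Fin (j + 1), a i * x' ^ (2 * (j - (i : ℕ))) * y ^ (ℓ + 2 * (i : ℕ) + 1)) x
          + x * deriv (fun y' : ℝ =>
              ∑ i : Fin (j + 1), a i * x ^ (2 * (j - (i : ℕ))) * y' ^ (ℓ + 2 * (i : ℕ) + 1)) y
        = x ^ (2 * j + 1) * y ^ ℓ := by
  set a : ℕ → ℝ := stmt16aux j ℓ with ha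
  refine ⟨fun i => a (i : ℕ), by simp [ha, stmt16aux], ?_⟩
  intro x y
  have hdx : deriv (fun x' : ℝ =>
        ∑ i : Fin (j + 1), a (i : ℕ) * x' ^ (2 * (j - (i : ℕ))) * y ^ (ℓ + 2 * (i : ℕ) + 1)) x
      = ∑ i : Fin (j + 1), a (i : ℕ) * ((2 * (j - (i : ℕ)) : ℕ) * x ^ (2 * (j - (i : ℕ)) - 1))
          * y ^ (ℓ + 2 * (i : ℕ) + 1) := by
    have : ∀ i : Fin (j + 1), HasDerivAt
        (fun x' : ℝ => a (i : ℕ) * x' ^ (2 * (j - (i : ℕ))) * y ^ (ℓ + 2 * (i : ℕ) + 1))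
        (a (i : ℕ) * ((2 * (j - (i : ℕ)) : ℕ) * x ^ (2 * (j - (i : ℕ)) - 1))
          * y ^ (ℓ + 2 * (i : ℕ) + 1)) x := fun i =>
      ((hasDerivAt_pow (2 * (j - (i : ℕ))) x).const_mul (a (i : ℕ))).mul_const _
    exact (HasDerivAt.fun_sum (fun i _ => this i)).deriv
  have hdy : deriv (fun y' : ℝ =>
        ∑ i : Fin (j + 1), a (i : ℕ) * x ^ (2 * (j - (i : ℕ))) * y' ^ (ℓ + 2 * (i : ℕ) + 1)) y
      = ∑ i : Fin (j + 1), a (i : ℕ) * x ^ (2 * (j - (i : ℕ)))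
          * ((ℓ + 2 * (i : ℕ) + 1 : ℕ) * y ^ (ℓ + 2 * (i : ℕ))) := by
    have : ∀ i : Fin (j + 1), HasDerivAt
        (fun y' : ℝ => a (i : ℕ) * x ^ (2 * (j - (i : ℕ))) * y' ^ (ℓ + 2 * (i : ℕ) + 1))
        (a (i : ℕ) * x ^ (2 * (j - (i : ℕ))) * ((ℓ + 2 * (i : ℕ) + 1 : ℕ) * y ^ (ℓ + 2 * (i : ℕ)))) y := by
      intro i
      simpa using (hasDerivAt_pow (ℓ + 2 * (i : ℕ) + 1) y).const_mul
        (a (i : ℕ) * x ^ (2 * (j - (i : ℕ))))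
    exact (HasDerivAt.fun_sum (fun i _ => this i)).deriv
  rw [hdx, hdy, Finset.mul_sum, Finset.mul_sum]
  rw [Fin.sum_univ_eq_sum_range
      (fun i => y * (a i * ((2 * (j - i) : ℕ) * x ^ (2 * (j - i) - 1)) * y ^ (ℓ + 2 * i + 1))),
    Fin.sum_univ_eq_sum_range
      (fun i => x * (a i * x ^ (2 * (j - i)) * ((ℓ + 2 * i + 1 : ℕ) * y ^ (ℓ + 2 * i))))]
  rw [Finset.sum_range_succ, Finset.sum_range_succ']
  have hzero : y * (a j * ((2 * (j - j) : ℕ) * x ^ (2 * (j - j) - 1)) * y ^ (ℓ + 2 * j + 1)) = 0 := by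
    simp
  rw [hzero, add_zero]
  have hfirst : x * (a 0 * x ^ (2 * (j - 0)) * ((ℓ + 2 * 0 + 1 : ℕ) * y ^ (ℓ + 2 * 0)))
      = x ^ (2 * j + 1) * y ^ ℓ := by
    have h1 : ((ℓ : ℝ) + 1) ≠ 0 := by positivity
    have ha0 : a 0 = 1 / ((ℓ : ℝ) + 1) := by simp [ha, stmt16aux]
    rw [ha0]
    push_cast
    field_simp
    rw [Nat.sub_zero]
    ring
  have hcancel : ∀ i ∈ Finset.range j,
      y * (a i * ((2 * (j - i) : ℕ) * x ^ (2 * (j - i) - 1)) * y ^ (ℓ + 2 * i + 1))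
      + x * (a (i + 1) * x ^ (2 * (j - (i + 1))) * ((ℓ + 2 * (i + 1) + 1 : ℕ) * y ^ (ℓ + 2 * (i + 1)))) = 0 := by
    intro i hi
    rw [Finset.mem_range] at hi
    obtain ⟨k, hk⟩ : ∃ k, j - (i + 1) = k := ⟨_, rfl⟩
    have hji : j - i = k + 1 := by omega
    have hrec := stmt16aux_rec j ℓ i
    rw [hji] at hrec
    have hexp1 : 2 * (k + 1) - 1 = 2 * k + 1 := by omega
    have hexp2 : ℓ + 2 * (i + 1) = ℓ + 2 * i + 2 := by ring
    rw [hji, hk, hexp1, hexp2]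
    push_cast at hrec ⊢
    linear_combination (x ^ (2 * k + 1) * y ^ (ℓ + 2 * i + 2)) * hrec
  rw [← add_assoc, ← Finset.sum_add_distrib, Finset.sum_eq_zero hcancel, zero_add, hfirst]
end
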